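/- Let l1,l2,l3>0 with l1+l2+l3=1, τ'∈ℝ, and k>0 real with sin(kl2)≠0, and suppose 2cot(kl2) + 2cos(τ')/sin(kl2) = k(l1+l3). Define v(x) := e^{−iτ'x}·(cos(k(l2−x)) + e^{iτ'}·cos(kx))/sin(kl2). Then ∫₀^{l2} |v(x)|² dx = (l1+l3)/2 + l2·(1 + cos(τ')·cos(kl2))/sin²(kl2). In particular, if τ' = τ + π then this quantity equals (l1+l3)/2 + l2·(1 − cos(τ)·cos(kl2))/sin²(kl2). -/

import Mathlib

open MeasureTheory

lemma bloch_norm_ptwise (τ' k l2 S x : ℝ) (hS : S = Real.sin (k*l2)) :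
    ‖Complex.exp (-(Complex.I * (τ' : ℂ) * (x : ℂ))) *
      ((Complex.cos ((k : ℂ) * ((l2 : ℂ) - (x : ℂ))) +
        Complex.exp (Complex.I * (τ' : ℂ)) * Complex.cos ((k : ℂ) * (x : ℂ))) /
        Complex.sin ((k : ℂ) * (l2 : ℂ)))‖ ^ 2
    = (Real.cos (k*(l2-x))^2 + Real.cos (k*x)^2
        + 2*Real.cos τ' * Real.cos (k*(l2-x)) * Real.cos (k*x)) / S^2 := by
  have h1 : Complex.cos ((k : ℂ) * ((l2 : ℂ) - (x : ℂ))) = ((Real.cos (k*(l2-x)) : ℝ) : ℂ) := by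
    rw [Complex.ofReal_cos]; norm_cast
  have h2 : Complex.cos ((k : ℂ) * (x : ℂ)) = ((Real.cos (k*x) : ℝ) : ℂ) := by
    rw [Complex.ofReal_cos]; norm_cast
  have h3 : Complex.sin ((k : ℂ) * (l2 : ℂ)) = ((S : ℝ) : ℂ) := by
    rw [hS, Complex.ofReal_sin]; norm_cast
  have h4 : Complex.exp (Complex.I * (τ' : ℂ)) = (Real.cos τ' : ℂ) + (Real.sin τ' : ℂ) * Complex.I := by
    rw [mul_comm, Complex.exp_mul_I, Complex.ofReal_cos, Complex.ofReal_sin]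
  rw [h1, h2, h3, h4, norm_mul, mul_pow]
  have h5 : ‖Complex.exp (-(Complex.I * (τ' : ℂ) * (x : ℂ)))‖ = 1 := by
    rw [Complex.norm_exp]
    simp
  rw [h5, one_pow, one_mul, norm_div, div_pow, Complex.sq_norm,
    Complex.sq_norm]
  have h6 : Complex.normSq ((S:ℝ):ℂ) = S^2 := by
    simp only [Complex.normSq_apply, Complex.ofReal_re, Complex.ofReal_im]; ring
  rw [h6]
  congr 1
  simp only [Complex.normSq_apply, Complex.add_re, Complex.add_im, Complex.mul_re,
    Complex.mul_im, Complex.ofReal_re, Complex.ofReal_im, Complex.I_re, Complex.I_im]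
  nlinarith [Real.sin_sq_add_cos_sq τ']

lemma bloch_integral_aux (k l2 c : ℝ) (hk : 0 < k) :
    (∫ x in (0:ℝ)..l2, (Real.cos (k*(l2-x))^2 + Real.cos (k*x)^2
        + 2*c * Real.cos (k*(l2-x)) * Real.cos (k*x)))
    = l2 * (1 + c * Real.cos (k*l2)) + Real.sin (k*l2) * (Real.cos (k*l2) + c) / k := by
  have hk' : (k:ℝ) ≠ 0 := ne_of_gt hk
  set F : ℝ → ℝ := fun x => x + c * Real.cos (k*l2) * x - Real.sin (2*k*(l2-x))/(4*k)
      + Real.sin (2*k*x)/(4*k) - c * Real.sin (k*(l2-2*x))/(2*k) with hF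
  have hderiv : ∀ x ∈ Set.uIcc (0:ℝ) l2, HasDerivAt F
      (Real.cos (k*(l2-x))^2 + Real.cos (k*x)^2
        + 2*c * Real.cos (k*(l2-x)) * Real.cos (k*x)) x := by
    intro x _
    have d1 : HasDerivAt (fun x : ℝ => 2*k*(l2-x)) (-(2*k)) x := by
      simpa using ((hasDerivAt_id x).const_sub l2).const_mul (2*k)
    have d2 : HasDerivAt (fun x : ℝ => 2*k*x) (2*k) x := by
      simpa using (hasDerivAt_id x).const_mul (2*k)
    have d3 : HasDerivAt (fun x : ℝ => k*(l2-2*x)) (-(2*k)) x := by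
      have : HasDerivAt (fun x : ℝ => l2 - 2*x) (-2) x := by
        simpa using ((hasDerivAt_id x).const_mul 2).const_sub l2
      simpa [mul_comm] using this.const_mul k
    have D : HasDerivAt F (1 + c * Real.cos (k*l2) - Real.cos (2*k*(l2-x)) * (-(2*k)) / (4*k)
        + Real.cos (2*k*x) * (2*k) / (4*k) - c * (Real.cos (k*(l2-2*x)) * (-(2*k))) / (2*k)) x := by
      simpa [F, Pi.add_def, Pi.sub_def] using ((((hasDerivAt_id x).add ((hasDerivAt_id x).const_mul (c * Real.cos (k*l2)))).sub
        (d1.sin.div_const (4*k))).add (d2.sin.div_const (4*k))).sub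
        ((d3.sin.const_mul c).div_const (2*k))
    convert D using 1
    have e1 : Real.cos (2*k*(l2-x)) = 2 * Real.cos (k*(l2-x))^2 - 1 := by
      rw [show 2*k*(l2-x) = 2*(k*(l2-x)) by ring, Real.cos_two_mul]
    have e2 : Real.cos (2*k*x) = 2 * Real.cos (k*x)^2 - 1 := by
      rw [show 2*k*x = 2*(k*x) by ring, Real.cos_two_mul]
    have e3 : Real.cos (k*l2) + Real.cos (k*(l2-2*x)) = 2 * Real.cos (k*(l2-x)) * Real.cos (k*x) := by
      rw [show k*l2 = k*(l2-x) + k*x by ring, show k*(l2-2*x) = k*(l2-x) - k*x by ring,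
        Real.cos_add, Real.cos_sub]
      ring
    rw [e1, e2, show Real.cos (k*(l2-2*x)) = 2*Real.cos (k*(l2-x))*Real.cos (k*x) - Real.cos (k*l2)
      from by linarith [e3]]
    field_simp
    ring
  have hcont : ContinuousOn (fun x : ℝ => Real.cos (k*(l2-x))^2 + Real.cos (k*x)^2
        + 2*c * Real.cos (k*(l2-x)) * Real.cos (k*x)) (Set.uIcc (0:ℝ) l2) := by
    fun_prop
  rw [intervalIntegral.integral_eq_sub_of_hasDerivAt hderiv (hcont.intervalIntegrable)]
  simp only [hF]
  rw [show 2*k*(l2-l2) = 0 by ring, show (2:ℝ)*k*0 = 0 by ring, show k*(l2-2*0) = k*l2 by ring,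
    show k*(l2-2*l2) = -(k*l2) by ring, show 2*k*(l2-0) = 2*(k*l2) by ring,
    show 2*k*l2 = 2*(k*l2) by ring, Real.sin_zero, Real.sin_neg, Real.sin_two_mul]
  field_simp
  ring

/-- Section 6.2 of the paper: the squared `L²(0,l2)` norm of the Bloch eigenfunction
`v(·;k)` of the `δ'`-type operator `A'_hom(τ')` at an eigenvalue `k²` satisfying the
dispersion relation (6.7); for `τ' = τ + π` it coincides with the norm of the
corresponding eigenvector of `A_hom^{(τ)}`. -/
theorem bloch_eigenfunction_norm_delta_prime (l1 l2 l3 : ℝ) (hl1 : 0 < l1)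
    (hl2 : 0 < l2) (hl3 : 0 < l3) (hsum : l1 + l2 + l3 = 1) (τ' : ℝ) (k : ℝ) (hk : 0 < k)
    (hs : Real.sin (k * l2) ≠ 0)
    (hdisp : 2 * Real.cos (k * l2) / Real.sin (k * l2)
        + 2 * Real.cos τ' / Real.sin (k * l2) = k * (l1 + l3))
    (v : ℝ → ℂ)
    (hv : v = fun x : ℝ => Complex.exp (-(Complex.I * (τ' : ℂ) * (x : ℂ))) *
      ((Complex.cos ((k : ℂ) * ((l2 : ℂ) - (x : ℂ))) +
        Complex.exp (Complex.I * (τ' : ℂ)) * Complex.cos ((k : ℂ) * (x : ℂ))) /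
        Complex.sin ((k : ℂ) * (l2 : ℂ)))) :
    (∫ x in Set.Ioo (0 : ℝ) l2, ‖v x‖ ^ 2)
        = (l1 + l3) / 2 +
          l2 * (1 + Real.cos τ' * Real.cos (k * l2)) / (Real.sin (k * l2)) ^ 2 ∧
    ∀ τ : ℝ, τ' = τ + Real.pi →
      (∫ x in Set.Ioo (0 : ℝ) l2, ‖v x‖ ^ 2)
        = (l1 + l3) / 2 +
          l2 * (1 - Real.cos τ * Real.cos (k * l2)) / (Real.sin (k * l2)) ^ 2 := by
  have key : (∫ x in Set.Ioo (0 : ℝ) l2, ‖v x‖ ^ 2)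
      = (l1 + l3) / 2 +
        l2 * (1 + Real.cos τ' * Real.cos (k * l2)) / (Real.sin (k * l2)) ^ 2 := by
    have h1 : (∫ x in Set.Ioo (0 : ℝ) l2, ‖v x‖ ^ 2)
        = ∫ x in Set.Ioo (0 : ℝ) l2, (Real.cos (k*(l2-x))^2 + Real.cos (k*x)^2
          + 2*Real.cos τ' * Real.cos (k*(l2-x)) * Real.cos (k*x)) / (Real.sin (k*l2))^2 := by
      refine setIntegral_congr_fun measurableSet_Ioo (fun x _ => ?_)
      rw [hv]
      exact bloch_norm_ptwise τ' k l2 (Real.sin (k*l2)) x rfl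
    rw [h1, ← MeasureTheory.integral_Ioc_eq_integral_Ioo,
      ← intervalIntegral.integral_of_le hl2.le]
    simp only [div_eq_mul_inv]
    rw [intervalIntegral.integral_mul_const, ← div_eq_mul_inv, bloch_integral_aux k l2 _ hk]
    have hk' : k ≠ 0 := ne_of_gt hk
    have hs' : Real.sin (l2*k) ≠ 0 := by rwa [mul_comm]
    field_simp
    field_simp at hdisp
    rw [mul_comm l2 k]
    linear_combination Real.sin (k*l2) * hdisp
  refine ⟨key, fun τ hτ => ?_⟩
  rw [key, hτ, Real.cos_add_pi]
  ring
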